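/- There exists a constant c > 0 such that for every continuously differentiable function v : [−1,1] → ℝ, sup_{x ∈ [−1,1]} |v(x)| ≤ c · ( ∫_{−1}^{1} v(x)² dx )^{1/4} · ( ∫_{−1}^{1} ( v(x)² + v'(x)² ) dx )^{1/4}; that is, ‖v‖_{L∞} ≤ c ‖v‖_{L²}^{1/2} ‖v‖_{H¹}^{1/2} on the bounded interval (−1,1). -/

import Mathlib

open MeasureTheory intervalIntegral

/-- one-dimensional Gagliardo–Nirenberg interpolation inequality
‖v‖_{L∞} ≤ c ‖v‖_{L²}^{1/2} ‖v‖_{H¹}^{1/2} on the interval (−1,1). -/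
theorem gagliardo_nirenberg_interval :
    ∃ c : ℝ, 0 < c ∧
      ∀ v : ℝ → ℝ, ContDiffOn ℝ 1 v (Set.Icc (-1:ℝ) 1) →
        ∀ x ∈ Set.Icc (-1:ℝ) 1,
          |v x| ≤ c * (∫ t in (-1:ℝ)..1, (v t) ^ 2) ^ ((1:ℝ)/4) *
            (∫ t in (-1:ℝ)..1,
              ((v t) ^ 2 + (derivWithin v (Set.Icc (-1:ℝ) 1) t) ^ 2)) ^ ((1:ℝ)/4) := by
  refine ⟨2, by norm_num, ?_⟩
  intro v hv x hx
  set I : Set ℝ := Set.Icc (-1:ℝ) 1 with hIdef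
  set w : ℝ → ℝ := derivWithin v I with hwdef
  have hud : UniqueDiffOn ℝ I := uniqueDiffOn_Icc (by norm_num)
  have hvc : ContinuousOn v I := hv.continuousOn
  have hwc : ContinuousOn w I := hv.continuousOn_derivWithin hud le_rfl
  have hg'c : ContinuousOn (fun t => 2 * v t * w t) I :=
    (continuousOn_const.mul hvc).mul hwc
  have huI : Set.uIcc (-1:ℝ) 1 = I := Set.uIcc_of_le (by norm_num)
  -- derivative of the square on the interior
  have hsq : ∀ t ∈ Set.Ioo (-1:ℝ) 1, HasDerivAt (fun s => (v s)^2) (2 * v t * w t) t := by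
    intro t ht
    have hmem : I ∈ nhds t := Icc_mem_nhds ht.1 ht.2
    have h1 : HasDerivAt v (w t) t :=
      ((hv.differentiableOn one_ne_zero t (Set.Ioo_subset_Icc_self ht)).hasDerivWithinAt).hasDerivAt hmem
    have h2 : HasDerivAt (fun s => v s * v s) (w t * v t + v t * w t) t := h1.mul h1
    have h3 : (fun s => (v s)^2) = fun s => v s * v s := by ext s; ring
    rw [h3]
    convert h2 using 1
    ring
  set D : ℝ := ∫ t in (-1:ℝ)..1, |v t| * |w t| with hDdef
  set A : ℝ := ∫ t in (-1:ℝ)..1, (v t)^2 with hAdef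
  set C : ℝ := ∫ t in (-1:ℝ)..1, (w t)^2 with hCdef
  set B : ℝ := ∫ t in (-1:ℝ)..1, ((v t)^2 + (w t)^2) with hBdef
  have hiv2 : IntervalIntegrable (fun t => (v t)^2) volume (-1) 1 :=
    ((hvc.pow 2).mono huI.subset).intervalIntegrable
  have hiw2 : IntervalIntegrable (fun t => (w t)^2) volume (-1) 1 :=
    ((hwc.pow 2).mono huI.subset).intervalIntegrable
  have hivw : IntervalIntegrable (fun t => |v t| * |w t|) volume (-1) 1 :=
    ((hvc.abs.mul hwc.abs).mono huI.subset).intervalIntegrable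
  have hiabs : IntervalIntegrable (fun t => 2 * |v t| * |w t|) volume (-1) 1 :=
    (((continuousOn_const.mul hvc.abs).mul hwc.abs).mono huI.subset).intervalIntegrable
  -- key pointwise bound
  have key : ∀ y ∈ I, (v x)^2 ≤ (v y)^2 + 2 * D := by
    intro y hy
    have hsub : Set.uIcc y x ⊆ I := by
      rw [← huI]; exact Set.uIcc_subset_uIcc (huI ▸ hy) (huI ▸ hx)
    have hcont2 : ContinuousOn (fun s => (v s)^2) (Set.uIcc y x) := (hvc.mono hsub).pow 2
    have hint : IntervalIntegrable (fun t => 2 * v t * w t) volume y x :=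
      (hg'c.mono hsub).intervalIntegrable
    have hftc : (∫ t in y..x, 2 * v t * w t) = (v x)^2 - (v y)^2 := by
      apply integral_eq_sub_of_hasDeriv_right hcont2 _ hint
      intro t ht
      have ht' : t ∈ Set.Ioo (-1:ℝ) 1 := by
        have h1 : (-1:ℝ) ≤ min y x := le_min hy.1 hx.1
        have h2 : max y x ≤ 1 := max_le hy.2 hx.2
        exact ⟨lt_of_le_of_lt h1 ht.1, lt_of_lt_of_le ht.2 h2⟩
      exact (hsq t ht').hasDerivWithinAt
    have habs : |∫ t in y..x, 2 * v t * w t| ≤ 2 * D := by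
      have hsubI : Set.uIoc y x ⊆ Set.uIoc (-1:ℝ) 1 :=
        Set.uIoc_subset_uIoc_of_uIcc_subset_uIcc (huI ▸ hsub)
      have h1 : |∫ t in y..x, 2 * v t * w t| ≤
          abs (∫ t in y..x, 2 * |v t| * |w t|) := by
        simpa [Real.norm_eq_abs] using
          intervalIntegral.norm_integral_le_abs_integral_norm
            (f := fun t => 2 * v t * w t) (a := y) (b := x) (μ := volume)
      have h2 : abs (∫ t in y..x, 2 * |v t| * |w t|) ≤
          abs (∫ t in (-1:ℝ)..1, 2 * |v t| * |w t|) :=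
        intervalIntegral.abs_integral_mono_interval hsubI
          (Filter.Eventually.of_forall fun t => by positivity) hiabs
      have h3 : (∫ t in (-1:ℝ)..1, 2 * |v t| * |w t|) = 2 * D := by
        rw [show (fun t => 2 * |v t| * |w t|) = fun t => 2 * (|v t| * |w t|) from
          funext fun t => mul_assoc _ _ _]
        rw [intervalIntegral.integral_const_mul]
      have h4 : abs (∫ t in (-1:ℝ)..1, 2 * |v t| * |w t|) =
          ∫ t in (-1:ℝ)..1, 2 * |v t| * |w t| :=
        abs_of_nonneg (intervalIntegral.integral_nonneg (by norm_num) fun u _ => by positivity)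
      calc |∫ t in y..x, 2 * v t * w t| ≤ abs (∫ t in y..x, 2 * |v t| * |w t|) := h1
        _ ≤ abs (∫ t in (-1:ℝ)..1, 2 * |v t| * |w t|) := h2
        _ = ∫ t in (-1:ℝ)..1, 2 * |v t| * |w t| := h4
        _ = 2 * D := h3
    nlinarith [abs_nonneg (∫ t in y..x, 2 * v t * w t), le_abs_self (∫ t in y..x, 2 * v t * w t), hftc]
  -- averaging over y
  have havg : 2 * (v x)^2 ≤ A + 2 * (2 * D) := by
    have hmono := intervalIntegral.integral_mono_on (by norm_num : (-1:ℝ) ≤ 1)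
      (_root_.intervalIntegrable_const (c := (v x)^2))
      (hiv2.add (_root_.intervalIntegrable_const (c := 2 * D)))
      (fun y hy => key y hy)
    rw [intervalIntegral.integral_const, intervalIntegral.integral_add hiv2
      (_root_.intervalIntegrable_const (c := 2 * D)), intervalIntegral.integral_const] at hmono
    simp only [smul_eq_mul] at hmono
    norm_num at hmono
    linarith
  -- Cauchy–Schwarz via Hölder
  have hDle : D ≤ Real.sqrt A * Real.sqrt C := by
    set μ' := volume.restrict (Set.Ioc (-1:ℝ) 1) with hμ'
    haveI : IsFiniteMeasure μ' := ⟨by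
      rw [hμ', Measure.restrict_apply_univ]; exact measure_Ioc_lt_top⟩
    have hconj : Real.HolderConjugate 2 2 := Real.HolderConjugate.two_two
    obtain ⟨M, hM⟩ := isCompact_Icc.exists_bound_of_continuousOn hvc
    obtain ⟨N, hN⟩ := isCompact_Icc.exists_bound_of_continuousOn hwc
    have hmemv : MemLp (fun t => |v t|) (ENNReal.ofReal 2) μ' := by
      apply MemLp.of_bound ((hvc.mono Set.Ioc_subset_Icc_self).abs.aestronglyMeasurable
        measurableSet_Ioc) M
      rw [ae_restrict_iff' measurableSet_Ioc]
      exact Filter.Eventually.of_forall fun t ht => by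
        simpa [Real.norm_eq_abs, abs_abs] using hM t (Set.Ioc_subset_Icc_self ht)
    have hmemw : MemLp (fun t => |w t|) (ENNReal.ofReal 2) μ' := by
      apply MemLp.of_bound ((hwc.mono Set.Ioc_subset_Icc_self).abs.aestronglyMeasurable
        measurableSet_Ioc) N
      rw [ae_restrict_iff' measurableSet_Ioc]
      exact Filter.Eventually.of_forall fun t ht => by
        simpa [Real.norm_eq_abs, abs_abs] using hN t (Set.Ioc_subset_Icc_self ht)
    have hH := MeasureTheory.integral_mul_le_Lp_mul_Lq_of_nonneg hconj
      (Filter.Eventually.of_forall fun t => abs_nonneg (v t))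
      (Filter.Eventually.of_forall fun t => abs_nonneg (w t)) hmemv hmemw
    have hrw : ∀ u : ℝ → ℝ, (fun t => |u t| ^ (2:ℝ)) = fun t => (u t)^2 := by
      intro u; funext t
      rw [show (2:ℝ) = ((2:ℕ):ℝ) by norm_num, Real.rpow_natCast, sq_abs]
    rw [hrw v, hrw w] at hH
    have hDe : D = ∫ t, |v t| * |w t| ∂μ' := by
      rw [hDdef, intervalIntegral.integral_of_le (by norm_num : (-1:ℝ) ≤ 1)]
    have hAe : (∫ t, (v t)^2 ∂μ') = A := by
      rw [hAdef, intervalIntegral.integral_of_le (by norm_num : (-1:ℝ) ≤ 1)]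
    have hCe : (∫ t, (w t)^2 ∂μ') = C := by
      rw [hCdef, intervalIntegral.integral_of_le (by norm_num : (-1:ℝ) ≤ 1)]
    rw [hDe]
    calc (∫ t, |v t| * |w t| ∂μ') ≤ (∫ t, (v t)^2 ∂μ') ^ ((1:ℝ)/2) * (∫ t, (w t)^2 ∂μ') ^ ((1:ℝ)/2) := by
          simpa using hH
      _ = Real.sqrt A * Real.sqrt C := by
          rw [hAe, hCe, Real.sqrt_eq_rpow, Real.sqrt_eq_rpow]
  have hA0 : 0 ≤ A := intervalIntegral.integral_nonneg (by norm_num) fun u _ => sq_nonneg _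
  have hC0 : 0 ≤ C := intervalIntegral.integral_nonneg (by norm_num) fun u _ => sq_nonneg _
  have hB : B = A + C := by
    rw [hBdef, hAdef, hCdef, intervalIntegral.integral_add hiv2 hiw2]
  have hAB : A ≤ B := by linarith
  have hCB : C ≤ B := by linarith
  have hB0 : 0 ≤ B := by linarith
  -- put everything together
  have hsqAB : Real.sqrt A ≤ Real.sqrt B := Real.sqrt_le_sqrt hAB
  have hsqCB : Real.sqrt C ≤ Real.sqrt B := Real.sqrt_le_sqrt hCB
  have hmain : (v x)^2 ≤ 4 * (Real.sqrt A * Real.sqrt B) := by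
    have h1 : (v x)^2 ≤ A/2 + 2 * D := by
      have := key x hx; linarith [havg]
    have h2 : A = Real.sqrt A * Real.sqrt A := (Real.mul_self_sqrt hA0).symm
    nlinarith [Real.sqrt_nonneg A, Real.sqrt_nonneg B, Real.sqrt_nonneg C,
      mul_le_mul_of_nonneg_left hsqCB (Real.sqrt_nonneg A),
      mul_le_mul_of_nonneg_left hsqAB (Real.sqrt_nonneg A)]
  have hrhs : 4 * (Real.sqrt A * Real.sqrt B)
      = (2 * Real.sqrt (Real.sqrt A) * Real.sqrt (Real.sqrt B))^2 := by
    rw [mul_pow, mul_pow, Real.sq_sqrt (Real.sqrt_nonneg A), Real.sq_sqrt (Real.sqrt_nonneg B)]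
    ring
  have habs : |v x| ≤ 2 * Real.sqrt (Real.sqrt A) * Real.sqrt (Real.sqrt B) := by
    have h := Real.sqrt_le_sqrt (hrhs ▸ hmain)
    rw [Real.sqrt_sq_eq_abs, Real.sqrt_sq (by positivity)] at h
    exact h
  have hq : ∀ a : ℝ, 0 ≤ a → Real.sqrt (Real.sqrt a) = a ^ ((1:ℝ)/4) := by
    intro a ha
    rw [Real.sqrt_eq_rpow, Real.sqrt_eq_rpow, ← Real.rpow_mul ha]
    norm_num
  calc |v x| ≤ 2 * Real.sqrt (Real.sqrt A) * Real.sqrt (Real.sqrt B) := habs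
    _ = 2 * A ^ ((1:ℝ)/4) * B ^ ((1:ℝ)/4) := by rw [hq A hA0, hq B hB0]
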